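/- Let A, B ⊆ ℝ² be compact with |A| = 1 + O(δ), |B| = 1 + O(δ), |tA + (1-t)B| < 1 + δ for t in a compact subset of (0,1). Suppose there is a ball ℬ of fixed radius R centered at 0 with |A ∩ ℬ| = 1 + o_δ(1) and |B ∩ ℬ| = 1 + o_δ(1). Then for sufficiently small δ, A and B are contained in the ball of radius R' = t^{-1}(2-t)R (and the analogous radius with t replaced by 1-t, respectively). -/

import Mathlib

open MeasureTheory Set Filter Metric
open scoped Pointwise ENNReal Topology

/-- 1D Brunn–Minkowski for nonempty compact sets. -/
lemma oneD_compact {K L : Set ℝ} (hK : IsCompact K) (hL : IsCompact L)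
    (hKne : K.Nonempty) (hLne : L.Nonempty) :
    volume K + volume L ≤ volume (K + L) := by
  obtain ⟨x, hxK, hx⟩ : ∃ x ∈ K, ∀ k ∈ K, k ≤ x := hK.exists_isGreatest hKne |>.imp
    (fun x h => ⟨h.1, fun k hk => h.2 hk⟩)
  obtain ⟨y, hyL, hy⟩ : ∃ y ∈ L, ∀ l ∈ L, y ≤ l := hL.exists_isLeast hLne |>.imp
    (fun y h => ⟨h.1, fun l hl => h.2 hl⟩)
  set U : Set ℝ := (· + y) '' K with hU
  set V : Set ℝ := (x + ·) '' L with hV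
  have hUvol : volume U = volume K := by
    have : U = (· + (-y)) ⁻¹' K := by
      ext u; simp [hU, Set.mem_image]
    rw [this, measure_preimage_add_right]
  have hVvol : volume V = volume L := by
    have : V = ((-x) + ·) ⁻¹' L := by
      ext v; simp [hV, Set.mem_image]
    rw [this, measure_preimage_add]
  have hsub : U ∪ V ⊆ K + L := by
    rintro z (⟨k, hk, rfl⟩ | ⟨l, hl, rfl⟩)
    · exact ⟨k, hk, y, hyL, rfl⟩
    · exact ⟨x, hxK, l, hl, rfl⟩
  have hinter : U ∩ V ⊆ {x + y} := by
    rintro z ⟨⟨k, hk, rfl⟩, ⟨l, hl, hl'⟩⟩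
    have h1 : k ≤ x := hx k hk
    have h2 : y ≤ l := hy l hl
    have : k + y = x + l := hl'.symm
    simp only [Set.mem_singleton_iff]
    linarith
  have hVmeas : MeasurableSet V := ((hL.image (continuous_add_left x)).isClosed).measurableSet
  have key : volume (U ∪ V) = volume U + volume V := by
    have h0 : volume (U ∩ V) = 0 :=
      measure_mono_null hinter (measure_singleton _)
    have := measure_union_add_inter (μ := volume) U hVmeas
    rw [h0, add_zero] at this
    exact this
  calc volume K + volume L = volume (U ∪ V) := by rw [key, hUvol, hVvol]
    _ ≤ volume (K + L) := measure_mono hsub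

lemma oneD_smul {K L : Set ℝ} (hK : IsCompact K) (hL : IsCompact L)
    (hKne : K.Nonempty) (hLne : L.Nonempty) {t : ℝ} (ht0 : 0 < t) (ht1 : t < 1) :
    ENNReal.ofReal t * volume K + ENNReal.ofReal (1 - t) * volume L
      ≤ volume (t • K + (1 - t) • L) := by
  have h1 : volume (t • K) = ENNReal.ofReal t * volume K := by
    rw [Measure.addHaar_smul_of_nonneg volume ht0.le]
    simp
  have h2 : volume ((1 - t) • L) = ENNReal.ofReal (1 - t) * volume L := by
    rw [Measure.addHaar_smul_of_nonneg volume (by linarith)]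
    simp
  have hKc : IsCompact (t • K) := hK.smul t
  have hLc : IsCompact ((1 - t) • L) := hL.smul (1 - t)
  have := oneD_compact hKc hLc (hKne.smul_set) (hLne.smul_set)
  rw [h1, h2] at this
  exact this

/-- 1D scaled BM for bounded measurable nonempty sets (lower bound on outer measure
of the possibly-nonmeasurable sum). -/
lemma oneD_meas {U V : Set ℝ} (hU : MeasurableSet U) (hV : MeasurableSet V)
    (hUne : U.Nonempty) (hVne : V.Nonempty)
    (hUb : Bornology.IsBounded U) (hVb : Bornology.IsBounded V)
    {t : ℝ} (ht0 : 0 < t) (ht1 : t < 1) :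
    ENNReal.ofReal t * volume U + ENNReal.ofReal (1 - t) * volume V
      ≤ volume (t • U + (1 - t) • V) := by
  have hUfin : volume U ≠ ∞ := (hUb.measure_lt_top).ne
  have hVfin : volume V ≠ ∞ := (hVb.measure_lt_top).ne
  refine ENNReal.le_of_forall_pos_le_add fun ε hε _ => ?_
  have hε2 : ((ε:ℝ≥0∞)/2) ≠ 0 := by
    simp [ENNReal.div_eq_zero_iff, hε.ne']
  obtain ⟨K, hKU, hKc, hKvol⟩ := hU.exists_isCompact_lt_add hUfin hε2
  obtain ⟨L, hLV, hLc, hLvol⟩ := hV.exists_isCompact_lt_add hVfin hε2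
  obtain ⟨u₀, hu₀⟩ := hUne
  obtain ⟨v₀, hv₀⟩ := hVne
  set K' := K ∪ {u₀} with hK'
  set L' := L ∪ {v₀} with hL'
  have hK'c : IsCompact K' := hKc.union isCompact_singleton
  have hL'c : IsCompact L' := hLc.union isCompact_singleton
  have hK'U : K' ⊆ U := union_subset hKU (by simpa using hu₀)
  have hL'V : L' ⊆ V := union_subset hLV (by simpa using hv₀)
  have hmain := oneD_smul hK'c hL'c ⟨u₀, by simp [hK']⟩ ⟨v₀, by simp [hL']⟩ ht0 ht1
  have hsub : t • K' + (1 - t) • L' ⊆ t • U + (1 - t) • V :=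
    Set.add_subset_add (Set.smul_set_mono hK'U) (Set.smul_set_mono hL'V)
  have hUK' : volume U ≤ volume K' + ε/2 :=
    le_trans (le_of_lt hKvol) (by gcongr; exact subset_union_left)
  have hVL' : volume V ≤ volume L' + ε/2 :=
    le_trans (le_of_lt hLvol) (by gcongr; exact subset_union_left)
  calc ENNReal.ofReal t * volume U + ENNReal.ofReal (1 - t) * volume V
      ≤ (ENNReal.ofReal t * (volume K' + ε/2)) + (ENNReal.ofReal (1-t) * (volume L' + ε/2)) := by
        gcongr
    _ ≤ (ENNReal.ofReal t * volume K' + ENNReal.ofReal (1-t) * volume L') + ε := by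
        rw [mul_add, mul_add]
        have ht' : ENNReal.ofReal t ≤ 1 := by
          simp [ENNReal.ofReal_le_one]; linarith
        have ht'' : ENNReal.ofReal (1-t) ≤ 1 := by
          simp [ENNReal.ofReal_le_one]; linarith
        have e1 : ENNReal.ofReal t * (ε/2) ≤ ε/2 := by
          calc ENNReal.ofReal t * (ε/2) ≤ 1 * (ε/2) := by gcongr
            _ = ε/2 := one_mul _
        have e2 : ENNReal.ofReal (1-t) * (ε/2) ≤ ε/2 := by
          calc ENNReal.ofReal (1-t) * (ε/2) ≤ 1 * (ε/2) := by gcongr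
            _ = ε/2 := one_mul _
        calc ENNReal.ofReal t * volume K' + ENNReal.ofReal t * (ε/2) +
              (ENNReal.ofReal (1-t) * volume L' + ENNReal.ofReal (1-t) * (ε/2))
            ≤ ENNReal.ofReal t * volume K' + ε/2 +
              (ENNReal.ofReal (1-t) * volume L' + ε/2) := by gcongr
          _ = (ENNReal.ofReal t * volume K' + ENNReal.ofReal (1-t) * volume L') + (ε/2 + ε/2) := by
              ring
          _ = (ENNReal.ofReal t * volume K' + ENNReal.ofReal (1-t) * volume L') + ε := by
              rw [ENNReal.add_halves]
    _ ≤ volume (t • K' + (1 - t) • L') + ε := add_le_add_left hmain ε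
    _ ≤ volume (t • U + (1 - t) • V) + ε := add_le_add_left (measure_mono hsub) ε

lemma layer_repr {f : ℝ → ℝ≥0∞} (hf : Measurable f) {r c : ℝ} (hr : 0 < r) (hc : 0 < c) :
    ∫⁻ u in Set.Ioo 0 c, volume {a : ℝ | ENNReal.ofReal (u*r) < f a}
      = ∫⁻ a, volume {u : ℝ | u ∈ Set.Ioo 0 c ∧ ENNReal.ofReal (u*r) < f a} := by
  set E : Set (ℝ × ℝ) := {w | w.1 ∈ Set.Ioo 0 c ∧ ENNReal.ofReal (w.1*r) < f w.2} with hE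
  have hEmeas : MeasurableSet E := by
    have h1 : MeasurableSet {w : ℝ × ℝ | w.1 ∈ Set.Ioo 0 c} :=
      measurable_fst measurableSet_Ioo
    have h2 : MeasurableSet {w : ℝ × ℝ | ENNReal.ofReal (w.1*r) < f w.2} :=
      measurableSet_lt ((measurable_fst.mul_const r).ennreal_ofReal) (hf.comp measurable_snd)
    exact h1.inter h2
  have h1 : (volume.prod volume) E
      = ∫⁻ u in Set.Ioo 0 c, volume {a : ℝ | ENNReal.ofReal (u*r) < f a} := by
    rw [Measure.prod_apply hEmeas]
    rw [← lintegral_indicator measurableSet_Ioo]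
    congr 1
    ext u
    by_cases hu : u ∈ Set.Ioo 0 c
    · rw [Set.indicator_of_mem hu]
      congr 1
      ext a
      simp only [hE, Set.mem_preimage, Set.mem_setOf_eq, hu, true_and]
    · rw [Set.indicator_of_notMem hu]
      have : Prod.mk u ⁻¹' E = ∅ := by
        ext a
        simp only [hE, Set.mem_preimage, Set.mem_setOf_eq, Set.mem_empty_iff_false, iff_false,
          not_and]
        exact fun h _ => hu h
      simp [this]
  have h2 : (volume.prod volume) E
      = ∫⁻ a, volume {u : ℝ | u ∈ Set.Ioo 0 c ∧ ENNReal.ofReal (u*r) < f a} := by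
    rw [Measure.prod_apply_symm hEmeas]
    rfl
  rw [← h1, h2]

lemma layer_low {f : ℝ → ℝ≥0∞} (hf : Measurable f) {r c : ℝ} (hr : 0 < r) (hc : 0 < c)
    (hb : ∀ᵐ a, f a ≤ ENNReal.ofReal (c * r)) :
    ENNReal.ofReal (1/r) * ∫⁻ a, f a
      = ∫⁻ u in Set.Ioo 0 c, volume {a : ℝ | ENNReal.ofReal (u*r) < f a} := by
  rw [layer_repr hf hr hc]
  rw [← lintegral_const_mul' _ _ (by simp : ENNReal.ofReal (1/r) ≠ ∞)]
  apply lintegral_congr_ae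
  filter_upwards [hb] with a ha
  have hfa : f a ≠ ∞ := (lt_of_le_of_lt ha (ENNReal.ofReal_lt_top)).ne
  set T : ℝ := (f a).toReal with hT
  have hT0 : 0 ≤ T := ENNReal.toReal_nonneg
  have hTcr : T ≤ c * r := by
    have := ENNReal.toReal_mono (by simp) ha
    rwa [ENNReal.toReal_ofReal (by positivity)] at this
  have hset : {u : ℝ | u ∈ Set.Ioo 0 c ∧ ENNReal.ofReal (u*r) < f a} = Set.Ioo 0 (T / r) := by
    ext u
    simp only [Set.mem_setOf_eq, Set.mem_Ioo]
    constructor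
    · rintro ⟨⟨hu0, huc⟩, hlt⟩
      refine ⟨hu0, ?_⟩
      have : u * r < T := (ENNReal.ofReal_lt_iff_lt_toReal (by positivity) hfa).mp hlt
      exact (lt_div_iff₀ hr).mpr this
    · rintro ⟨hu0, huT⟩
      have hur : u * r < T := (lt_div_iff₀ hr).mp huT
      have hTpos : 0 < T := lt_of_le_of_lt (by positivity) hur
      refine ⟨⟨hu0, ?_⟩, ?_⟩
      · nlinarith
      · calc ENNReal.ofReal (u*r) < ENNReal.ofReal T :=
              (ENNReal.ofReal_lt_ofReal_iff hTpos).mpr hur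
          _ = f a := ENNReal.ofReal_toReal hfa
  rw [hset, Real.volume_Ioo, sub_zero, div_eq_mul_one_div T r, ENNReal.ofReal_mul hT0,
    ENNReal.ofReal_toReal hfa, mul_comm]

lemma layer_up {h : ℝ → ℝ≥0∞} (hh : Measurable h) {c : ℝ} (hc : 0 < c) :
    ∫⁻ u in Set.Ioo 0 c, volume {s : ℝ | ENNReal.ofReal u < h s} ≤ ∫⁻ s, h s := by
  have := layer_repr (r := 1) (c := c) hh one_pos hc
  simp only [mul_one] at this
  rw [this]
  apply lintegral_mono
  intro s
  by_cases hs : h s = ∞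
  · simp [hs]
  · have : {u : ℝ | u ∈ Set.Ioo 0 c ∧ ENNReal.ofReal u < h s} ⊆ Set.Ioo 0 ((h s).toReal) := by
      rintro u ⟨⟨hu0, _⟩, hlt⟩
      exact ⟨hu0, (ENNReal.ofReal_lt_iff_lt_toReal hu0.le hs).mp hlt⟩
    calc volume {u : ℝ | u ∈ Set.Ioo 0 c ∧ ENNReal.ofReal u < h s}
        ≤ volume (Set.Ioo 0 ((h s).toReal)) := measure_mono this
      _ = ENNReal.ofReal ((h s).toReal) := by rw [Real.volume_Ioo, sub_zero]
      _ ≤ h s := ENNReal.ofReal_toReal_le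

/-- Weak Brunn–Minkowski in the plane: the volume of a convex combination of two
compact sets is at least the minimum of the volumes. -/
lemma bm_prod {t : ℝ} (ht0 : 0 < t) (ht1 : t < 1) {X Y : Set (ℝ × ℝ)}
    (hX : IsCompact X) (hY : IsCompact Y) :
    min (volume X) (volume Y) ≤ volume (t • X + (1 - t) • Y) := by
  by_cases hX0 : volume X = 0
  · exact le_trans (min_le_left _ _) (hX0 ▸ zero_le)
  by_cases hY0 : volume Y = 0
  · exact le_trans (min_le_right _ _) (hY0 ▸ zero_le)
  have ht1' : 0 < 1 - t := by linarith
  -- a common bound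
  obtain ⟨r, hr0, hrX⟩ := hX.isBounded.subset_closedBall_lt 0 0
  obtain ⟨r', hr'0, hrY⟩ := hY.isBounded.subset_closedBall_lt r 0
  have hrXr' : X ⊆ closedBall 0 r' := hrX.trans (closedBall_subset_closedBall hr'0.le)
  have hr'pos : 0 < r' := hr0.trans hr'0
  -- fiber functions
  set f : ℝ → ℝ≥0∞ := fun a => volume (Prod.mk a ⁻¹' X) with hf_def
  set g : ℝ → ℝ≥0∞ := fun b => volume (Prod.mk b ⁻¹' Y) with hg_def
  have hf : Measurable f := measurable_measure_prodMk_left hX.measurableSet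
  have hg : Measurable g := measurable_measure_prodMk_left hY.measurableSet
  -- fibers are within [-r', r']
  have hfibX : ∀ a : ℝ, Prod.mk a ⁻¹' X ⊆ Set.Icc (-r') r' := by
    intro a v hv
    have := hrXr' hv
    rw [mem_closedBall_zero_iff, Prod.norm_def] at this
    have : |v| ≤ r' := le_trans (le_max_right _ _) this
    exact abs_le.mp this
  have hfibY : ∀ b : ℝ, Prod.mk b ⁻¹' Y ⊆ Set.Icc (-r') r' := by
    intro b v hv
    have := hrY hv
    rw [mem_closedBall_zero_iff, Prod.norm_def] at this
    have : |v| ≤ r' := le_trans (le_max_right _ _) this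
    exact abs_le.mp this
  have hfibXfst : ∀ a : ℝ, (Prod.mk a ⁻¹' X).Nonempty → a ∈ Set.Icc (-r') r' := by
    intro a ⟨v, hv⟩
    have := hrXr' hv
    rw [mem_closedBall_zero_iff, Prod.norm_def] at this
    exact abs_le.mp (le_trans (le_max_left _ _) this)
  have hfibYfst : ∀ b : ℝ, (Prod.mk b ⁻¹' Y).Nonempty → b ∈ Set.Icc (-r') r' := by
    intro b ⟨v, hv⟩
    have := hrY hv
    rw [mem_closedBall_zero_iff, Prod.norm_def] at this
    exact abs_le.mp (le_trans (le_max_left _ _) this)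
  have hfbound : ∀ a, f a ≤ ENNReal.ofReal (2*r') := by
    intro a
    calc f a ≤ volume (Set.Icc (-r') r') := measure_mono (hfibX a)
      _ = ENNReal.ofReal (2*r') := by rw [Real.volume_Icc]; norm_num; ring_nf; rw [ENNReal.ofReal_mul hr'pos.le]; simp
  have hgbound : ∀ b, g b ≤ ENNReal.ofReal (2*r') := by
    intro b
    calc g b ≤ volume (Set.Icc (-r') r') := measure_mono (hfibY b)
      _ = ENNReal.ofReal (2*r') := by rw [Real.volume_Icc]; norm_num; ring_nf; rw [ENNReal.ofReal_mul hr'pos.le]; simp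
  -- total integrals
  have hF : ∫⁻ a, f a = volume X := by
    rw [hf_def, ← Measure.prod_apply hX.measurableSet, ← Measure.volume_eq_prod]
  have hG : ∫⁻ b, g b = volume Y := by
    rw [hg_def, ← Measure.prod_apply hY.measurableSet, ← Measure.volume_eq_prod]
  -- essential sups
  set P : ℝ≥0∞ := essSup f volume with hP_def
  set Q : ℝ≥0∞ := essSup g volume with hQ_def
  have hPtop : P ≠ ∞ :=
    (lt_of_le_of_lt (essSup_le_of_ae_le _ (ae_of_all _ hfbound)) ENNReal.ofReal_lt_top).ne
  have hQtop : Q ≠ ∞ :=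
    (lt_of_le_of_lt (essSup_le_of_ae_le _ (ae_of_all _ hgbound)) ENNReal.ofReal_lt_top).ne
  have hP0 : P ≠ 0 := by
    intro h
    apply hX0
    rw [← hF]
    rw [lintegral_eq_zero_iff hf]
    exact ENNReal.essSup_eq_zero_iff.mp h
  have hQ0 : Q ≠ 0 := by
    intro h
    apply hY0
    rw [← hG]
    rw [lintegral_eq_zero_iff hg]
    exact ENNReal.essSup_eq_zero_iff.mp h
  set p : ℝ := P.toReal with hp_def
  set q : ℝ := Q.toReal with hq_def
  have hp : 0 < p := ENNReal.toReal_pos hP0 hPtop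
  have hq : 0 < q := ENNReal.toReal_pos hQ0 hQtop
  have hfp : ∀ᵐ a, f a ≤ ENNReal.ofReal p := by
    filter_upwards [ENNReal.ae_le_essSup f] with a ha
    rwa [← hP_def, ← ENNReal.ofReal_toReal hPtop] at ha
  have hgq : ∀ᵐ b, g b ≤ ENNReal.ofReal q := by
    filter_upwards [ENNReal.ae_le_essSup g] with b hb
    rwa [← hQ_def, ← ENNReal.ofReal_toReal hQtop] at hb
  set c : ℝ := t * p + (1 - t) * q with hc_def
  have hc : 0 < c := by positivity
  -- the sum set and its fibers
  set S : Set (ℝ × ℝ) := t • X + (1 - t) • Y with hS_def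
  have hSc : IsCompact S := (hX.smul t).add (hY.smul (1 - t))
  set h : ℝ → ℝ≥0∞ := fun s => volume (Prod.mk s ⁻¹' S) with hh_def
  have hh : Measurable h := measurable_measure_prodMk_left hSc.measurableSet
  have hvolS : volume S = ∫⁻ s, h s := by
    rw [hh_def, ← Measure.prod_apply hSc.measurableSet, ← Measure.volume_eq_prod]
  -- main pointwise bound on level sets
  have key : ∀ u ∈ Set.Ioo (0:ℝ) c,
      ENNReal.ofReal t * volume {a : ℝ | ENNReal.ofReal (u*(p/c)) < f a}
        + ENNReal.ofReal (1-t) * volume {b : ℝ | ENNReal.ofReal (u*(q/c)) < g b}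
      ≤ volume {s : ℝ | ENNReal.ofReal u < h s} := by
    intro u hu
    obtain ⟨hu0, huc⟩ := hu
    set Uf : Set ℝ := {a | ENNReal.ofReal (u*(p/c)) < f a} with hUf_def
    set Ug : Set ℝ := {b | ENNReal.ofReal (u*(q/c)) < g b} with hUg_def
    have hUfm : MeasurableSet Uf := measurableSet_lt measurable_const hf
    have hUgm : MeasurableSet Ug := measurableSet_lt measurable_const hg
    have hUfpos : volume Uf ≠ 0 := by
      intro h0
      have : ∀ᵐ a, f a ≤ ENNReal.ofReal (u*(p/c)) := by
        rw [ae_iff]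
        convert h0 using 2
        ext a
        simp [hUf_def, not_le]
      have h1 : P ≤ ENNReal.ofReal (u*(p/c)) := essSup_le_of_ae_le _ this
      have h2 : ENNReal.ofReal (u*(p/c)) < ENNReal.ofReal p := by
        apply (ENNReal.ofReal_lt_ofReal_iff hp).mpr
        calc u * (p/c) < c * (p/c) := by
              apply mul_lt_mul_of_pos_right huc (by positivity)
          _ = p := by field_simp
      rw [← ENNReal.ofReal_toReal hPtop, ← hp_def] at h1
      exact absurd (lt_of_le_of_lt h1 h2) (lt_irrefl _)
    have hUgpos : volume Ug ≠ 0 := by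
      intro h0
      have : ∀ᵐ b, g b ≤ ENNReal.ofReal (u*(q/c)) := by
        rw [ae_iff]
        convert h0 using 2
        ext b
        simp [hUg_def, not_le]
      have h1 : Q ≤ ENNReal.ofReal (u*(q/c)) := essSup_le_of_ae_le _ this
      have h2 : ENNReal.ofReal (u*(q/c)) < ENNReal.ofReal q := by
        apply (ENNReal.ofReal_lt_ofReal_iff hq).mpr
        calc u * (q/c) < c * (q/c) := by
              apply mul_lt_mul_of_pos_right huc (by positivity)
          _ = q := by field_simp
      rw [← ENNReal.ofReal_toReal hQtop, ← hq_def] at h1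
      exact absurd (lt_of_le_of_lt h1 h2) (lt_irrefl _)
    have hUfne : Uf.Nonempty := nonempty_of_measure_ne_zero hUfpos
    have hUgne : Ug.Nonempty := nonempty_of_measure_ne_zero hUgpos
    have hUfb : Bornology.IsBounded Uf := by
      apply (Metric.isBounded_Icc (-r') r').subset
      intro a ha
      apply hfibXfst
      have ha' : ENNReal.ofReal (u*(p/c)) < f a := ha
      have : f a ≠ 0 := (lt_of_le_of_lt (zero_le) ha').ne'
      exact nonempty_of_measure_ne_zero this
    have hUgb : Bornology.IsBounded Ug := by
      apply (Metric.isBounded_Icc (-r') r').subset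
      intro b hb
      apply hfibYfst
      have hb' : ENNReal.ofReal (u*(q/c)) < g b := hb
      have : g b ≠ 0 := (lt_of_le_of_lt (zero_le) hb').ne'
      exact nonempty_of_measure_ne_zero this
    have hcont : t • Uf + (1-t) • Ug ⊆ {s : ℝ | ENNReal.ofReal u < h s} := by
      rintro s ⟨x, hx, y, hy, rfl⟩
      obtain ⟨a, ha, rfl⟩ := hx
      obtain ⟨b, hb, rfl⟩ := hy
      simp only [smul_eq_mul, Set.mem_setOf_eq]
      -- fibers
      set Xa : Set ℝ := Prod.mk a ⁻¹' X with hXa_def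
      set Yb : Set ℝ := Prod.mk b ⁻¹' Y with hYb_def
      have hXac : IsCompact Xa :=
        IsCompact.of_isClosed_subset isCompact_Icc
          (hX.isClosed.preimage (Continuous.prodMk_right a)) (hfibX a)
      have hYbc : IsCompact Yb :=
        IsCompact.of_isClosed_subset isCompact_Icc
          (hY.isClosed.preimage (Continuous.prodMk_right b)) (hfibY b)
      have hXane : Xa.Nonempty := by
        have ha' : ENNReal.ofReal (u*(p/c)) < f a := ha
        have : f a ≠ 0 := (lt_of_le_of_lt (zero_le) ha').ne'
        exact nonempty_of_measure_ne_zero this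
      have hYbne : Yb.Nonempty := by
        have hb' : ENNReal.ofReal (u*(q/c)) < g b := hb
        have : g b ≠ 0 := (lt_of_le_of_lt (zero_le) hb').ne'
        exact nonempty_of_measure_ne_zero this
      -- fiber containment in the sumset fiber
      have hfib_sub : t • Xa + (1-t) • Yb ⊆ Prod.mk (t*a + (1-t)*b) ⁻¹' S := by
        rintro v ⟨v1, hv1, v2, hv2, rfl⟩
        obtain ⟨w1, hw1, rfl⟩ := hv1
        obtain ⟨w2, hw2, rfl⟩ := hv2
        simp only [Set.mem_preimage, hS_def, smul_eq_mul]
        refine ⟨t • (a, w1), Set.smul_mem_smul_set hw1,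
          (1-t) • (b, w2), Set.smul_mem_smul_set hw2, ?_⟩
        simp [Prod.ext_iff]
      have hlow : ENNReal.ofReal t * f a + ENNReal.ofReal (1-t) * g b
          ≤ h (t*a + (1-t)*b) := by
        calc ENNReal.ofReal t * f a + ENNReal.ofReal (1-t) * g b
            ≤ volume (t • Xa + (1-t) • Yb) := oneD_smul hXac hYbc hXane hYbne ht0 ht1
          _ ≤ h (t*a + (1-t)*b) := measure_mono hfib_sub
      refine lt_of_lt_of_le ?_ hlow
      have hcne : c ≠ 0 := ne_of_gt hc
      have hueq : u = t*(u*(p/c)) + (1-t)*(u*(q/c)) := by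
        have : t*(u*(p/c)) + (1-t)*(u*(q/c)) = u * ((t*p + (1-t)*q)/c) := by ring
        rw [this, ← hc_def, div_self hcne, mul_one]
      calc ENNReal.ofReal u
          = ENNReal.ofReal t * ENNReal.ofReal (u*(p/c))
            + ENNReal.ofReal (1-t) * ENNReal.ofReal (u*(q/c)) := by
            rw [← ENNReal.ofReal_mul ht0.le, ← ENNReal.ofReal_mul ht1'.le,
              ← ENNReal.ofReal_add (by positivity) (by positivity), ← hueq]
        _ < ENNReal.ofReal t * f a + ENNReal.ofReal (1-t) * g b := by
            apply ENNReal.add_lt_add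
            · exact ENNReal.mul_lt_mul_right (a := ENNReal.ofReal t) (by simp [ENNReal.ofReal_eq_zero]; linarith)
                ENNReal.ofReal_ne_top ha
            · exact ENNReal.mul_lt_mul_right (a := ENNReal.ofReal (1-t)) (by simp [ENNReal.ofReal_eq_zero]; linarith)
                ENNReal.ofReal_ne_top hb
    calc ENNReal.ofReal t * volume Uf + ENNReal.ofReal (1-t) * volume Ug
        ≤ volume (t • Uf + (1-t) • Ug) := oneD_meas hUfm hUgm hUfne hUgne hUfb hUgb ht0 ht1
      _ ≤ volume {s : ℝ | ENNReal.ofReal u < h s} := measure_mono hcont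
  -- integrate the key bound
  have step1 : ∫⁻ u in Set.Ioo 0 c,
      (ENNReal.ofReal t * volume {a : ℝ | ENNReal.ofReal (u*(p/c)) < f a}
        + ENNReal.ofReal (1-t) * volume {b : ℝ | ENNReal.ofReal (u*(q/c)) < g b})
      ≤ volume S := by
    rw [hvolS]
    refine le_trans ?_ (layer_up hh hc)
    apply lintegral_mono_ae
    filter_upwards [self_mem_ae_restrict measurableSet_Ioo] with u hu
    exact key u hu
  have hsplit : ENNReal.ofReal t * (ENNReal.ofReal (c/p) * volume X)
      + ENNReal.ofReal (1-t) * (ENNReal.ofReal (c/q) * volume Y) ≤ volume S := by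
    refine le_trans ?_ step1
    have e1 : ∫⁻ u in Set.Ioo 0 c,
        ENNReal.ofReal t * volume {a : ℝ | ENNReal.ofReal (u*(p/c)) < f a}
        = ENNReal.ofReal t * (ENNReal.ofReal (c/p) * volume X) := by
      rw [lintegral_const_mul' _ _ (by simp : ENNReal.ofReal t ≠ ∞)]
      congr 1
      have hb : ∀ᵐ a, f a ≤ ENNReal.ofReal (c * (p/c)) := by
        have : c * (p/c) = p := by field_simp
        rw [this]; exact hfp
      have := layer_low hf (by positivity : (0:ℝ) < p/c) hc hb
      rw [← this, hF, one_div_div]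
    have e2 : ∫⁻ u in Set.Ioo 0 c,
        ENNReal.ofReal (1-t) * volume {b : ℝ | ENNReal.ofReal (u*(q/c)) < g b}
        = ENNReal.ofReal (1-t) * (ENNReal.ofReal (c/q) * volume Y) := by
      rw [lintegral_const_mul' _ _ (by simp : ENNReal.ofReal (1-t) ≠ ∞)]
      congr 1
      have hb : ∀ᵐ b, g b ≤ ENNReal.ofReal (c * (q/c)) := by
        have : c * (q/c) = q := by field_simp
        rw [this]; exact hgq
      have := layer_low hg (by positivity : (0:ℝ) < q/c) hc hb
      rw [← this, hG, one_div_div]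
    rw [← e1, ← e2]
    exact le_lintegral_add _ _
  -- final arithmetic
  set m : ℝ≥0∞ := min (volume X) (volume Y) with hm_def
  have hfinal : m ≤ ENNReal.ofReal t * (ENNReal.ofReal (c/p) * volume X)
      + ENNReal.ofReal (1-t) * (ENNReal.ofReal (c/q) * volume Y) := by
    have hco : 1 ≤ t * (c/p) + (1-t) * (c/q) := by
      rw [← sub_nonneg]
      have : t * (c/p) + (1-t) * (c/q) - 1 = t*(1-t)*(p-q)^2/(p*q) := by
        rw [hc_def]; field_simp; ring
      rw [this]; positivity
    calc m = 1 * m := (one_mul m).symm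
      _ ≤ ENNReal.ofReal (t * (c/p) + (1-t) * (c/q)) * m := by
          gcongr
          rw [ENNReal.one_le_ofReal]; exact hco
      _ = (ENNReal.ofReal (t * (c/p)) + ENNReal.ofReal ((1-t) * (c/q))) * m := by
          rw [ENNReal.ofReal_add (by positivity) (by positivity)]
      _ = ENNReal.ofReal (t * (c/p)) * m + ENNReal.ofReal ((1-t) * (c/q)) * m := by
          rw [add_mul]
      _ ≤ ENNReal.ofReal (t * (c/p)) * volume X + ENNReal.ofReal ((1-t) * (c/q)) * volume Y := by
          gcongr
          · exact min_le_left _ _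
          · exact min_le_right _ _
      _ = ENNReal.ofReal t * (ENNReal.ofReal (c/p) * volume X)
          + ENNReal.ofReal (1-t) * (ENNReal.ofReal (c/q) * volume Y) := by
          rw [ENNReal.ofReal_mul ht0.le, ENNReal.ofReal_mul ht1'.le, mul_assoc, mul_assoc]
  exact le_trans hfinal hsplit

noncomputable abbrev E2 := EuclideanSpace ℝ (Fin 2)

noncomputable def e2equiv : E2 ≃ᵐ (ℝ × ℝ) :=
  (MeasurableEquiv.toLp 2 (Fin 2 → ℝ)).symm.trans (MeasurableEquiv.piFinTwo (fun _ => ℝ))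

lemma e2equiv_apply (x : E2) : e2equiv x = (x 0, x 1) := rfl

lemma e2equiv_mp : MeasurePreserving e2equiv volume volume := by
  have h1 := EuclideanSpace.volume_preserving_symm_measurableEquiv_toLp (Fin 2)
  have h2 := volume_preserving_piFinTwo (fun _ : Fin 2 => ℝ)
  have := h2.comp h1
  rw [e2equiv, MeasurableEquiv.coe_trans]
  exact this

lemma e2equiv_add (x y : E2) : e2equiv (x + y) = e2equiv x + e2equiv y := rfl

lemma e2equiv_smul (t : ℝ) (x : E2) : e2equiv (t • x) = t • e2equiv x := rfl

lemma e2equiv_image_add (S T : Set E2) :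
    e2equiv '' (S + T) = e2equiv '' S + e2equiv '' T := by
  ext x
  constructor
  · rintro ⟨y, ⟨s, hs, t, ht, rfl⟩, rfl⟩
    exact ⟨e2equiv s, ⟨s, hs, rfl⟩, e2equiv t, ⟨t, ht, rfl⟩, (e2equiv_add s t).symm⟩
  · rintro ⟨y, ⟨s, hs, rfl⟩, z, ⟨t, ht, rfl⟩, rfl⟩
    exact ⟨s + t, ⟨s, hs, t, ht, rfl⟩, e2equiv_add s t⟩

lemma e2equiv_image_smul (t : ℝ) (S : Set E2) :
    e2equiv '' (t • S) = t • (e2equiv '' S) := by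
  ext x
  constructor
  · rintro ⟨y, ⟨s, hs, rfl⟩, rfl⟩
    exact ⟨e2equiv s, ⟨s, hs, rfl⟩, (e2equiv_smul t s).symm⟩
  · rintro ⟨y, ⟨s, hs, rfl⟩, rfl⟩
    exact ⟨t • s, ⟨s, hs, rfl⟩, e2equiv_smul t s⟩

lemma e2equiv_cont : Continuous (e2equiv : E2 → ℝ × ℝ) := by
  have h1 : Continuous fun x : E2 => ((x 0 : ℝ), (x 1 : ℝ)) :=
    ((EuclideanSpace.proj (0 : Fin 2)).continuous).prodMk
      ((EuclideanSpace.proj (1 : Fin 2)).continuous)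
  convert h1 using 1
  exact funext fun x => rfl

lemma e2equiv_vol_image {s : Set E2} (hs : NullMeasurableSet s volume) :
    volume (e2equiv '' s) = volume s := by
  rw [MeasurableEquiv.image_eq_preimage_symm]
  exact (e2equiv_mp.symm e2equiv).measure_preimage hs

/-- Weak Brunn–Minkowski in the Euclidean plane. -/
lemma bm_E2 {t : ℝ} (ht0 : 0 < t) (ht1 : t < 1) {X Y : Set E2}
    (hX : IsCompact X) (hY : IsCompact Y) :
    min (volume X) (volume Y) ≤ volume (t • X + (1 - t) • Y) := by
  have hX' : IsCompact (e2equiv '' X) := hX.image e2equiv_cont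
  have hY' : IsCompact (e2equiv '' Y) := hY.image e2equiv_cont
  have hsum : IsCompact (t • X + (1 - t) • Y) := (hX.smul t).add (hY.smul (1 - t))
  have him : e2equiv '' (t • X + (1 - t) • Y)
      = t • (e2equiv '' X) + (1 - t) • (e2equiv '' Y) := by
    rw [e2equiv_image_add, e2equiv_image_smul, e2equiv_image_smul]
  calc min (volume X) (volume Y)
      = min (volume (e2equiv '' X)) (volume (e2equiv '' Y)) := by
        rw [e2equiv_vol_image hX.measurableSet.nullMeasurableSet,
          e2equiv_vol_image hY.measurableSet.nullMeasurableSet]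
    _ ≤ volume (t • (e2equiv '' X) + (1 - t) • (e2equiv '' Y)) := bm_prod ht0 ht1 hX' hY'
    _ = volume (e2equiv '' (t • X + (1 - t) • Y)) := by rw [him]
    _ = volume (t • X + (1 - t) • Y) :=
        e2equiv_vol_image hsum.measurableSet.nullMeasurableSet

lemma vol_singleton_add (v : E2) (W : Set E2) : volume ({v} + W) = volume W := by
  have h : {v} + W = ((-v) + ·) ⁻¹' W := by
    ext x
    simp only [Set.singleton_add, Set.mem_image, Set.mem_preimage]
    constructor
    · rintro ⟨w, hw, rfl⟩; simpa using hw
    · intro hx; exact ⟨-v + x, hx, by abel⟩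
  rw [h, measure_preimage_add]

lemma vol_smul_E2 (r : ℝ) (W : Set E2) (hr : 0 ≤ r) :
    volume (r • W) = ENNReal.ofReal (r^2) * volume W := by
  rw [Measure.addHaar_smul]
  congr 2
  rw [finrank_euclideanSpace_fin]
  rw [abs_of_nonneg (by positivity)]

set_option maxHeartbeats 1000000 in
theorem stmt15 (Λ : Set ℝ) (hΛ : IsCompact Λ) (hΛsub : Λ ⊆ Set.Ioo 0 1)
    (R : ℝ) (hR : 0 < R) (C₁ : ℝ) (hC₁ : 0 < C₁)
    (e : ℝ → ℝ) (he0 : ∀ δ > (0:ℝ), 0 ≤ e δ)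
    (he : Tendsto e (𝓝[>] 0) (𝓝 0)) :
    ∃ δ₀ > (0:ℝ), ∀ δ : ℝ, 0 < δ → δ < δ₀ →
      ∀ A B : Set (EuclideanSpace ℝ (Fin 2)), ∀ t ∈ Λ,
        IsCompact A → IsCompact B →
        |(volume A).toReal - 1| ≤ C₁ * δ →
        |(volume B).toReal - 1| ≤ C₁ * δ →
        volume (t • A + (1 - t) • B) < ENNReal.ofReal (1 + δ) →
        |(volume (A ∩ closedBall 0 R)).toReal - 1| ≤ e δ →
        |(volume (B ∩ closedBall 0 R)).toReal - 1| ≤ e δ →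
        A ⊆ closedBall 0 (t⁻¹ * (2 - t) * R) ∧
        B ⊆ closedBall 0 ((1 - t)⁻¹ * (1 + t) * R) := by
  rcases Set.eq_empty_or_nonempty Λ with hΛe | hΛne
  · exact ⟨1, one_pos, fun δ _ _ A B t ht => by simp [hΛe] at ht⟩
  have haΛ : sInf Λ ∈ Λ := hΛ.sInf_mem hΛne
  have hbΛ : sSup Λ ∈ Λ := hΛ.sSup_mem hΛne
  set a : ℝ := sInf Λ with ha_def
  set b : ℝ := sSup Λ with hb_def
  have ha : a ∈ Set.Ioo (0:ℝ) 1 := hΛsub haΛ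
  have hb : b ∈ Set.Ioo (0:ℝ) 1 := hΛsub hbΛ
  set c₀ : ℝ := min (a^2) ((1-b)^2) with hc₀_def
  have hc₀ : 0 < c₀ := lt_min (by nlinarith [ha.1]) (by nlinarith [hb.2])
  have hc₀1 : c₀ ≤ 1 := le_trans (min_le_left _ _) (by nlinarith [ha.1, ha.2])
  have hev : ∀ᶠ δ in 𝓝[>] (0:ℝ), e δ < c₀/4 :=
    he.eventually_lt_const (by positivity)
  obtain ⟨u, hu, huIoo⟩ := mem_nhdsGT_iff_exists_Ioo_subset.mp hev
  refine ⟨min u (c₀/2), lt_min hu (by positivity), ?_⟩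
  intro δ hδ0 hδlt A B t htΛ hAco hBco hvolA hvolB hsum hAe hBe
  have ht : t ∈ Set.Ioo (0:ℝ) 1 := hΛsub htΛ
  obtain ⟨ht0, ht1⟩ := ht
  have ht1' : 0 < 1 - t := by linarith
  have hta : a ≤ t := csInf_le hΛ.bddBelow htΛ
  have htb : t ≤ b := le_csSup hΛ.bddAbove htΛ
  have heδ : e δ < c₀/4 := huIoo ⟨hδ0, lt_of_lt_of_le hδlt (min_le_left _ _)⟩
  have heδ0 : 0 ≤ e δ := he0 δ hδ0
  have hδc₀ : δ < c₀/2 := lt_of_lt_of_le hδlt (min_le_right _ _)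
  set A' : Set E2 := A ∩ closedBall 0 R with hA'_def
  set B' : Set E2 := B ∩ closedBall 0 R with hB'_def
  have hA'c : IsCompact A' := hAco.inter_right isClosed_closedBall
  have hB'c : IsCompact B' := hBco.inter_right isClosed_closedBall
  have volA' : ENNReal.ofReal (1 - e δ) ≤ volume A' :=
    ENNReal.ofReal_le_of_le_toReal (by linarith [(abs_le.mp hAe).1])
  have volB' : ENNReal.ofReal (1 - e δ) ≤ volume B' :=
    ENNReal.ofReal_le_of_le_toReal (by linarith [(abs_le.mp hBe).1])
  have hbmP1 : ENNReal.ofReal (1 - e δ) ≤ volume (t • A' + (1-t) • B') :=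
    le_trans (le_min volA' volB') (bm_E2 ht0 ht1 hA'c hB'c)
  have hP1sub : t • A' + (1-t) • B' ⊆ t • A + (1-t) • B :=
    Set.add_subset_add (Set.smul_set_mono Set.inter_subset_left)
      (Set.smul_set_mono Set.inter_subset_left)
  have hP1norm : ∀ x ∈ t • A' + (1-t) • B', ‖x‖ ≤ R := by
    rintro x ⟨y, ⟨α, hα, rfl⟩, z0, ⟨β, hβ, rfl⟩, rfl⟩
    have h1 : ‖α‖ ≤ R := mem_closedBall_zero_iff.mp hα.2
    have h2 : ‖β‖ ≤ R := mem_closedBall_zero_iff.mp hβ.2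
    calc ‖t • α + (1-t) • β‖ ≤ ‖t • α‖ + ‖(1-t) • β‖ := norm_add_le _ _
      _ = t * ‖α‖ + (1-t) * ‖β‖ := by
          rw [norm_smul, norm_smul, Real.norm_eq_abs, Real.norm_eq_abs,
            abs_of_pos ht0, abs_of_pos ht1']
      _ ≤ R := by nlinarith
  -- the master contradiction
  have main : ∀ W : Set E2, W ⊆ t • A + (1-t) • B → (∀ x ∈ W, R < ‖x‖) →
      ENNReal.ofReal (c₀ * (1 - e δ)) ≤ volume W → False := by
    intro W hWsub hWnorm hWvol
    have hdisj : Disjoint W (t • A' + (1-t) • B') :=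
      Set.disjoint_left.mpr fun x hxW hxP1 =>
        absurd (hP1norm x hxP1) (not_le.mpr (hWnorm x hxW))
    have hP1m : MeasurableSet (t • A' + (1-t) • B') :=
      ((hA'c.smul t).add (hB'c.smul (1-t))).measurableSet
    have hunion : volume (W ∪ (t • A' + (1-t) • B')) = volume W + volume (t • A' + (1-t) • B') :=
      measure_union hdisj hP1m
    have hsub2 : W ∪ (t • A' + (1-t) • B') ⊆ t • A + (1-t) • B :=
      Set.union_subset hWsub hP1sub
    have hge : ENNReal.ofReal (c₀ * (1 - e δ) + (1 - e δ)) ≤ volume (t • A + (1-t) • B) := by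
      calc ENNReal.ofReal (c₀ * (1 - e δ) + (1 - e δ))
          = ENNReal.ofReal (c₀ * (1 - e δ)) + ENNReal.ofReal (1 - e δ) :=
            ENNReal.ofReal_add (by nlinarith) (by nlinarith)
        _ ≤ volume W + volume (t • A' + (1-t) • B') := add_le_add hWvol hbmP1
        _ = volume (W ∪ (t • A' + (1-t) • B')) := hunion.symm
        _ ≤ volume (t • A + (1-t) • B) := measure_mono hsub2
    have hnum : 1 + δ ≤ c₀ * (1 - e δ) + (1 - e δ) := by
      nlinarith [mul_le_of_le_one_left heδ0 hc₀1]
    have : ENNReal.ofReal (1 + δ) ≤ volume (t • A + (1-t) • B) :=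
      le_trans (ENNReal.ofReal_le_ofReal hnum) hge
    exact absurd hsum (not_lt.mpr this)
  constructor
  · -- A is bounded
    intro z hz
    by_contra hzout
    rw [mem_closedBall_zero_iff, not_le] at hzout
    have h2R : (2-t) * R < t * ‖z‖ := by
      have := mul_lt_mul_of_pos_left hzout ht0
      calc (2-t) * R = t * (t⁻¹ * (2-t) * R) := by field_simp
        _ < t * ‖z‖ := this
    apply main (t • ({z} : Set E2) + (1-t) • B')
    · exact Set.add_subset_add (Set.smul_set_mono (Set.singleton_subset_iff.mpr hz))
        (Set.smul_set_mono Set.inter_subset_left)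
    · rintro x ⟨y, ⟨ζ, hζ, rfl⟩, z0, ⟨β, hβ, rfl⟩, rfl⟩
      rw [Set.eq_of_mem_singleton hζ]
      have h2 : ‖β‖ ≤ R := mem_closedBall_zero_iff.mp hβ.2
      have hn : ‖t • z‖ ≤ ‖t • z + (1-t) • β‖ + ‖(1-t) • β‖ := by
        have hrw : t • z = (t • z + (1-t) • β) - (1-t) • β := by abel
        calc ‖t • z‖ = ‖(t • z + (1-t) • β) - (1-t) • β‖ := by rw [← hrw]
          _ ≤ ‖t • z + (1-t) • β‖ + ‖(1-t) • β‖ := norm_sub_le _ _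
      rw [norm_smul, Real.norm_eq_abs, abs_of_pos ht0] at hn
      rw [norm_smul, Real.norm_eq_abs, abs_of_pos ht1'] at hn
      nlinarith [mul_le_mul_of_nonneg_left h2 ht1'.le]
    · have hrw : t • ({z} : Set E2) = {t • z} := Set.smul_set_singleton
      rw [hrw, vol_singleton_add, vol_smul_E2 _ _ ht1'.le]
      have h1 : (1-b)^2 ≤ (1-t)^2 := pow_le_pow_left₀ (by linarith [hb.2]) (by linarith [htb]) 2
      have h2 : c₀ ≤ (1-t)^2 := le_trans (min_le_right _ _) h1
      calc ENNReal.ofReal (c₀ * (1 - e δ))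
          ≤ ENNReal.ofReal ((1-t)^2 * (1 - e δ)) := by
            apply ENNReal.ofReal_le_ofReal; nlinarith
        _ = ENNReal.ofReal ((1-t)^2) * ENNReal.ofReal (1 - e δ) :=
            ENNReal.ofReal_mul (by positivity)
        _ ≤ ENNReal.ofReal ((1-t)^2) * volume B' := by gcongr
  · -- B is bounded
    intro w hw
    by_contra hwout
    rw [mem_closedBall_zero_iff, not_le] at hwout
    have h2R : (1+t) * R < (1-t) * ‖w‖ := by
      have := mul_lt_mul_of_pos_left hwout ht1'
      calc (1+t) * R = (1-t) * ((1-t)⁻¹ * (1+t) * R) := by field_simp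
        _ < (1-t) * ‖w‖ := this
    apply main (t • A' + (1-t) • ({w} : Set E2))
    · exact Set.add_subset_add (Set.smul_set_mono Set.inter_subset_left)
        (Set.smul_set_mono (Set.singleton_subset_iff.mpr hw))
    · rintro x ⟨y, ⟨α, hα, rfl⟩, z0, ⟨ζ, hζ, rfl⟩, rfl⟩
      rw [Set.eq_of_mem_singleton hζ]
      have h1 : ‖α‖ ≤ R := mem_closedBall_zero_iff.mp hα.2
      have hn : ‖(1-t) • w‖ ≤ ‖t • α + (1-t) • w‖ + ‖t • α‖ := by
        have hrw : (1-t) • w = (t • α + (1-t) • w) - t • α := by abel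
        calc ‖(1-t) • w‖ = ‖(t • α + (1-t) • w) - t • α‖ := by rw [← hrw]
          _ ≤ ‖t • α + (1-t) • w‖ + ‖t • α‖ := norm_sub_le _ _
      rw [norm_smul, Real.norm_eq_abs, abs_of_pos ht1'] at hn
      rw [norm_smul, Real.norm_eq_abs, abs_of_pos ht0] at hn
      nlinarith [mul_le_mul_of_nonneg_left h1 ht0.le]
    · have hrw : (1-t) • ({w} : Set E2) = {(1-t) • w} := Set.smul_set_singleton
      rw [hrw]
      rw [add_comm (t • A') _, vol_singleton_add, vol_smul_E2 _ _ ht0.le]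
      have h1 : a^2 ≤ t^2 := pow_le_pow_left₀ ha.1.le hta 2
      have h2 : c₀ ≤ t^2 := le_trans (min_le_left _ _) h1
      calc ENNReal.ofReal (c₀ * (1 - e δ))
          ≤ ENNReal.ofReal (t^2 * (1 - e δ)) := by
            apply ENNReal.ofReal_le_ofReal; nlinarith
        _ = ENNReal.ofReal (t^2) * ENNReal.ofReal (1 - e δ) :=
            ENNReal.ofReal_mul (by positivity)
        _ ≤ ENNReal.ofReal (t^2) * volume A' := by gcongr
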